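/- Łojasiewicz exponent is invariant under direct sum with a nondegenerate quadratic form: Let f : U ⊂ X → K be C² with f(0) = 0, f'(0) = 0, and f'(x) ∈ X̃ for x ∈ U, and let Q(y) = ½⟨y, A y⟩ on a Banach space Y be given by a bounded symmetric operator A : Y → Ỹ with complemented kernel and range Ỹ. Define f_Q(x,y) = f(x) + Q(y). Then for θ ∈ [1/2, 1): f satisfies a Łojasiewicz gradient inequality with exponent θ on (a possibly shrunken) U if and only if f_Q satisfies one with exponent θ on U × V for some neighborhood V of 0 in Y, with norms taken in X̃ ⊕ Ỹ. -/

import Mathlib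

/-- Subadditivity of `t ^ p` for `0 ≤ p ≤ 1` on nonnegative reals. -/
lemma aux_rpow_add_le_add_rpow {a b p : ℝ} (ha : 0 ≤ a) (hb : 0 ≤ b) (hp : 0 ≤ p)
    (hp1 : p ≤ 1) : (a + b) ^ p ≤ a ^ p + b ^ p := by
  lift a to NNReal using ha
  lift b to NNReal using hb
  have := NNReal.rpow_add_le_add_rpow a b hp hp1
  exact_mod_cast this


/-- Invariance of the Łojasiewicz exponent under direct sum with a nondegenerate quadratic
form: let `f : U ⊂ X → 𝕜` be `C²` with `f(0) = 0`, `f'(0) = 0`, and derivative represented by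
a gradient `Df` with values in `X̃ ⊂ X*`, and let `Q(y) = ½⟨y, A y⟩` on a Banach space `Y` be
defined by a bounded symmetric operator `A : Y → Ỹ ⊂ Y*` with complemented kernel, range `Ỹ`,
and obeying the quadratic Łojasiewicz inequality `‖A y‖ ≥ c |Q(y)|^{1/2}`.  Then for
`θ ∈ [1/2, 1)`: `f` obeys a Łojasiewicz gradient inequality with exponent `θ` on a possibly
shrunken `U` if and only if `f_Q(x,y) = f(x) + Q(y)` obeys one with exponent `θ` on `U' × V`
for some neighborhood `V` of `0` in `Y`, with norms taken in `X̃ ⊕ Ỹ`. -/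
theorem lojasiewicz_invariance_quadratic_summand {𝕜 X X' Y Y' : Type*} [RCLike 𝕜]
    [NormedAddCommGroup X] [NormedSpace 𝕜 X] [CompleteSpace X]
    [NormedAddCommGroup X'] [NormedSpace 𝕜 X'] [CompleteSpace X']
    [NormedAddCommGroup Y] [NormedSpace 𝕜 Y] [CompleteSpace Y]
    [NormedAddCommGroup Y'] [NormedSpace 𝕜 Y'] [CompleteSpace Y']
    (jX : X' →L[𝕜] StrongDual 𝕜 X) (hjX : Function.Injective jX)
    (jY : Y' →L[𝕜] StrongDual 𝕜 Y) (hjY : Function.Injective jY)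
    (U : Set X) (hU : IsOpen U) (h0U : (0 : X) ∈ U)
    (f : X → 𝕜) (hf : ContDiffOn 𝕜 2 f U) (hf0 : f 0 = 0)
    (Df : X → X') (hDf : ∀ x ∈ U, HasFDerivAt f (jX (Df x)) x)
    (hDf0 : Df 0 = 0) (hDfc : ContinuousOn Df U)
    (A : Y →L[𝕜] Y')
    (hA : ∀ y z : Y, jY (A y) z = jY (A z) y)
    (Y₀ : Submodule 𝕜 Y) (hY₀ : IsClosed (Y₀ : Set Y))
    (hcompl : IsCompl Y₀ (LinearMap.ker (A : Y →ₗ[𝕜] Y')))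
    (hrange : LinearMap.range (A : Y →ₗ[𝕜] Y') = (⊤ : Submodule 𝕜 Y'))
    (c : ℝ) (hc : 0 < c)
    (hQ : ∀ y : Y, c * ‖(2 : 𝕜)⁻¹ * jY (A y) y‖ ^ ((1 : ℝ) / 2) ≤ ‖A y‖)
    (θ : ℝ) (hθ : 1 / 2 ≤ θ) (hθ' : θ < 1) :
    (∃ U' ⊆ U, IsOpen U' ∧ (0 : X) ∈ U' ∧ ∃ C : ℝ, 0 < C ∧
        ∀ x ∈ U', C * ‖f x‖ ^ θ ≤ ‖Df x‖)
    ↔ (∃ U' ⊆ U, IsOpen U' ∧ (0 : X) ∈ U' ∧ ∃ V : Set Y, IsOpen V ∧ (0 : Y) ∈ V ∧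
        ∃ C : ℝ, 0 < C ∧ ∀ x ∈ U', ∀ y ∈ V,
          C * ‖f x + (2 : 𝕜)⁻¹ * jY (A y) y‖ ^ θ ≤ ‖Df x‖ + ‖A y‖) := by
  have hθ0 : 0 < θ := lt_of_lt_of_le (by norm_num) hθ
  constructor
  · rintro ⟨U', hU'U, hU'open, h0', C, hC, hL⟩
    refine ⟨U', hU'U, hU'open, h0', {y : Y | ‖A y‖ < c}, ?_, by simp [hc], min C c,
      lt_min hC hc, ?_⟩
    · exact isOpen_lt (continuous_norm.comp A.continuous) continuous_const
    · intro x hx y hy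
      simp only [Set.mem_setOf_eq] at hy
      set a := ‖f x‖ with ha
      set b := ‖(2 : 𝕜)⁻¹ * jY (A y) y‖ with hb
      have ha0 : 0 ≤ a := norm_nonneg _
      have hb0 : 0 ≤ b := norm_nonneg _
      -- b ^ θ ≤ c⁻¹ * ‖A y‖
      have hbsqrt : b ^ ((1:ℝ)/2) ≤ ‖A y‖ / c := by
        rw [le_div_iff₀ hc, mul_comm]; exact hQ y
      have hbθ : b ^ θ ≤ c⁻¹ * ‖A y‖ := by
        rcases eq_or_lt_of_le hb0 with hb0' | hb0'
        · rw [← hb0', Real.zero_rpow hθ0.ne']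
          positivity
        · have hb1 : b ≤ 1 := by
            by_contra hgt
            push_neg at hgt
            have h1 : (1:ℝ) < b ^ ((1:ℝ)/2) := by
              have := Real.one_lt_rpow_iff_of_pos (lt_trans zero_lt_one hgt) (y := (1:ℝ)/2)
              exact this.mpr (Or.inl ⟨hgt, by norm_num⟩)
            have h2 : b ^ ((1:ℝ)/2) < 1 := lt_of_le_of_lt hbsqrt ((div_lt_one hc).mpr hy)
            linarith
          have : b ^ θ ≤ b ^ ((1:ℝ)/2) :=
            Real.rpow_le_rpow_of_exponent_ge hb0' hb1 hθ
          calc b ^ θ ≤ ‖A y‖ / c := le_trans this hbsqrt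
            _ = c⁻¹ * ‖A y‖ := by rw [div_eq_inv_mul]
      have haθ : a ^ θ ≤ C⁻¹ * ‖Df x‖ := by
        have := hL x hx
        rw [← ha] at this
        calc a ^ θ = C⁻¹ * (C * a ^ θ) := by field_simp
          _ ≤ C⁻¹ * ‖Df x‖ := by
            apply mul_le_mul_of_nonneg_left this (by positivity)
      have hsum : ‖f x + (2 : 𝕜)⁻¹ * jY (A y) y‖ ^ θ ≤ a ^ θ + b ^ θ := by
        calc ‖f x + (2 : 𝕜)⁻¹ * jY (A y) y‖ ^ θ ≤ (a + b) ^ θ := by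
              apply Real.rpow_le_rpow (norm_nonneg _) (norm_add_le _ _) hθ0.le
          _ ≤ a ^ θ + b ^ θ := aux_rpow_add_le_add_rpow ha0 hb0 hθ0.le hθ'.le
      have hmin : min C c ≤ C := min_le_left _ _
      have hminc : min C c ≤ c := min_le_right _ _
      have hminpos : 0 < min C c := lt_min hC hc
      calc min C c * ‖f x + (2 : 𝕜)⁻¹ * jY (A y) y‖ ^ θ
          ≤ min C c * (a ^ θ + b ^ θ) := by
            apply mul_le_mul_of_nonneg_left hsum hminpos.le
        _ ≤ min C c * (C⁻¹ * ‖Df x‖ + c⁻¹ * ‖A y‖) := by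
            apply mul_le_mul_of_nonneg_left (add_le_add haθ hbθ) hminpos.le
        _ = min C c * C⁻¹ * ‖Df x‖ + min C c * c⁻¹ * ‖A y‖ := by ring
        _ ≤ 1 * ‖Df x‖ + 1 * ‖A y‖ := by
            apply add_le_add
            · apply mul_le_mul_of_nonneg_right _ (norm_nonneg _)
              rw [← mul_inv_cancel₀ hC.ne']
              exact mul_le_mul_of_nonneg_right hmin (by positivity)
            · apply mul_le_mul_of_nonneg_right _ (norm_nonneg _)
              rw [← mul_inv_cancel₀ hc.ne']
              exact mul_le_mul_of_nonneg_right hminc (by positivity)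
        _ = ‖Df x‖ + ‖A y‖ := by ring
  · rintro ⟨U', hU'U, hU'open, h0', V, hVopen, h0V, C, hC, hL⟩
    refine ⟨U', hU'U, hU'open, h0', C, hC, fun x hx => ?_⟩
    have := hL x hx 0 h0V
    simpa using this
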